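/- arXiv:0812.4047 — 3 statements merged into one kernel-verified Lean document; each statement's English description precedes it below -/
import Mathlib

section
/- For every integer p ≥ 1 and every m ≥ 0, the exponential generating function of the m-th column of the p-th power of the Stirling matrix satisfies, in the ring of formal power series ℝ⟦X⟧: Σ_{n=0}^∞ S^p_{n,m}·X^n/n! = (σ^p)^m/m!, where σ^p is the p-fold compositional iterate of exp(X) − 1. -/
/-- Stirling numbers of the second kind. -/
def S2 : ℕ → ℕ → ℕ
  | 0, 0 => 1
  | 0, _ + 1 => 0
  | _ + 1, 0 => 0
  | n + 1, m + 1 => (m + 1) * S2 n (m + 1) + S2 n m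

/-- Entries `S^p_{n,m}` of the `p`-th power of the Stirling matrix (for `p ≥ 1`;
the value at `p = 0` is junk). -/
def Sp : ℕ → ℕ → ℕ → ℕ
  | 0, _, _ => 0
  | 1, n, m => S2 n m
  | p + 2, n, m => ∑ k ∈ Finset.range (n + 1), S2 n k * Sp (p + 1) k m

/-- Composition `f ∘ g` of formal power series (the intended meaning when `g` has zero
constant term, in which case `coeff n (g ^ k) = 0` for `k > n`). -/
noncomputable def PSComp (f g : PowerSeries ℝ) : PowerSeries ℝ :=
  PowerSeries.mk fun n =>
    ∑ k ∈ Finset.range (n + 1), (PowerSeries.coeff (R := ℝ) k f) * (PowerSeries.coeff (R := ℝ) n (g ^ k))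

/-- `σ^p`, the `p`-fold compositional iterate of `exp X − 1` (with `σ^0 = X`). -/
noncomputable def sigmaP : ℕ → PowerSeries ℝ
  | 0 => PowerSeries.X
  | p + 1 => PSComp (sigmaP p) (PowerSeries.exp ℝ - 1)


lemma S2_zero_right : ∀ n, S2 (n+1) 0 = 0 := fun _ => rfl

lemma S2_eq_zero : ∀ {n m : ℕ}, n < m → S2 n m = 0
  | 0, m+1, _ => rfl
  | n+1, m+1, h => by
      rw [S2, S2_eq_zero (Nat.lt_of_succ_lt_succ (Nat.lt_succ_of_lt h)),
        S2_eq_zero (Nat.lt_of_succ_lt_succ h)]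
      simp

lemma S2_succ_succ (n m : ℕ) : S2 (n+1) (m+1) = (m+1) * S2 n (m+1) + S2 n m := rfl

lemma S2_rec (n m : ℕ) : S2 (n+1) (m+1) = (m+1) * S2 n (m+1) + S2 n m := by
  cases n <;> cases m <;> rfl

lemma lemB : ∀ n m, ∑ k ∈ Finset.range (n+1), n.choose k * S2 k m = S2 (n+1) (m+1)
  | 0, m => by simp [S2]
  | n+1, m => by
    have peel : ∑ k ∈ Finset.range (n+2), (n+1).choose k * S2 k m
        = (∑ k ∈ Finset.range (n+1), (n+1).choose (k+1) * S2 (k+1) m) + S2 0 m := by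
      rw [Finset.sum_range_succ']; simp
    have expand : ∑ k ∈ Finset.range (n+1), (n+1).choose (k+1) * S2 (k+1) m
        = (∑ k ∈ Finset.range (n+1), n.choose k * S2 (k+1) m)
          + ∑ k ∈ Finset.range (n+1), n.choose (k+1) * S2 (k+1) m := by
      rw [← Finset.sum_add_distrib]
      exact Finset.sum_congr rfl fun k _ => by rw [Nat.choose_succ_succ, add_mul]
    have second : (∑ k ∈ Finset.range (n+1), n.choose (k+1) * S2 (k+1) m) + S2 0 m
        = S2 (n+1) (m+1) := by
      rw [← lemB n m]
      conv_rhs => rw [Finset.sum_range_succ']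
      rw [Finset.sum_range_succ, Nat.choose_succ_self]
      simp
    have first : ∑ k ∈ Finset.range (n+1), n.choose k * S2 (k+1) m
        = m * S2 (n+1) (m+1) + S2 (n+1) m := by
      cases m with
      | zero =>
        have hz : ∀ k, S2 (k+1) 0 = 0 := fun _ => rfl
        simp [hz, S2_zero_right]
      | succ m' =>
        have : ∑ k ∈ Finset.range (n+1), n.choose k * S2 (k+1) (m'+1)
            = (m'+1) * (∑ k ∈ Finset.range (n+1), n.choose k * S2 k (m'+1))
              + ∑ k ∈ Finset.range (n+1), n.choose k * S2 k m' := by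
          rw [Finset.mul_sum, ← Finset.sum_add_distrib]
          exact Finset.sum_congr rfl fun k _ => by rw [S2_rec]; ring
        rw [this, lemB n (m'+1), lemB n m']
    rw [peel, expand, add_assoc, second, first,
      show n+2 = (n+1)+1 from rfl, S2_rec (n+1) m]
    ring

lemma lemB' (n m : ℕ) : ∑ k ∈ Finset.range n, n.choose k * S2 k m = (m+1) * S2 n (m+1) := by
  have hB := lemB n m
  rw [Finset.sum_range_succ, Nat.choose_self, one_mul] at hB
  have h2 : S2 (n+1) (m+1) = (m+1) * S2 n (m+1) + S2 n m := by
    cases n with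
    | zero => cases m <;> rfl
    | succ n' => exact S2_rec _ _
  omega

open PowerSeries in
lemma lemA (m : ℕ) : (exp ℝ - 1)^m
    = mk (fun n => (m.factorial * S2 n m : ℝ) / n.factorial) := by
  induction m with
  | zero =>
    ext n
    rw [pow_zero, coeff_mk]
    cases n with
    | zero => simp [S2]
    | succ n' => rw [coeff_one, if_neg (Nat.succ_ne_zero n'), S2_zero_right]; simp
  | succ m ih =>
    ext n
    rw [pow_succ, ih, coeff_mul, Finset.Nat.sum_antidiagonal_eq_sum_range_succ_mk, coeff_mk]
    have hτ : ∀ b : ℕ, (coeff (R := ℝ) b) (exp ℝ - 1)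
        = if b = 0 then 0 else 1 / (b.factorial : ℝ) := by
      intro b
      rw [map_sub, coeff_exp, coeff_one]
      cases b with
      | zero => simp
      | succ b' => simp
    have hterm : ∀ k ∈ Finset.range (n+1),
        (coeff (R := ℝ) k) (mk fun n => (m.factorial * S2 n m : ℝ) / n.factorial)
          * (coeff (R := ℝ) (n - k)) (exp ℝ - 1)
        = if k = n then 0 else
            (m.factorial * S2 k m : ℝ) / k.factorial * (1 / ((n-k).factorial : ℝ)) := by
      intro k hk
      rw [Finset.mem_range] at hk
      rw [coeff_mk, hτ]
      by_cases h : k = n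
      · simp [h]
      · rw [if_neg h, if_neg (by omega)]
    rw [Finset.sum_congr rfl hterm, Finset.sum_range_succ, if_pos rfl, add_zero]
    have hfact : ∀ x ∈ Finset.range n,
        (if x = n then (0:ℝ) else
          (m.factorial * S2 x m : ℝ) / x.factorial * (1 / ((n-x).factorial : ℝ)))
        = (m.factorial : ℝ)/n.factorial * ((n.choose x * S2 x m : ℕ) : ℝ) := by
      intro x hx
      rw [Finset.mem_range] at hx
      rw [if_neg (by omega)]
      have key : ((n.choose x : ℝ)) * x.factorial * (n-x).factorial = n.factorial := by
        exact_mod_cast Nat.choose_mul_factorial_mul_factorial hx.le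
      have h1 : (x.factorial : ℝ) ≠ 0 := Nat.cast_ne_zero.2 x.factorial_ne_zero
      have h2 : ((n-x).factorial : ℝ) ≠ 0 := Nat.cast_ne_zero.2 (n-x).factorial_ne_zero
      have h3 : (n.factorial : ℝ) ≠ 0 := Nat.cast_ne_zero.2 n.factorial_ne_zero
      have hc : ((n.choose x : ℕ) : ℝ) ≠ 0 :=
        Nat.cast_ne_zero.2 (Nat.choose_pos hx.le).ne'
      push_cast
      rw [← key]
      field_simp
    rw [Finset.sum_congr rfl hfact, ← Finset.mul_sum, ← Nat.cast_sum, lemB' n m]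
    rw [Nat.factorial_succ]
    push_cast
    ring

open PowerSeries

lemma coeff_PSComp (f g : PowerSeries ℝ) (n : ℕ) :
    coeff (R := ℝ) n (PSComp f g) = ∑ k ∈ Finset.range (n + 1), (coeff (R := ℝ) k f) * (coeff (R := ℝ) n (g ^ k)) := by
  rw [PSComp, coeff_mk]

lemma coeff_pow_eq_zero {g : PowerSeries ℝ} (hg : constantCoeff (R := ℝ) g = 0)
    {n k : ℕ} (h : n < k) : coeff (R := ℝ) n (g ^ k) = 0 := by
  have hdvd : (X : PowerSeries ℝ) ^ k ∣ g ^ k :=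
    pow_dvd_pow_of_dvd (X_dvd_iff.2 hg) k
  exact (X_pow_dvd_iff.1 hdvd) n h

lemma PSComp_mul (f₁ f₂ g : PowerSeries ℝ) (hg : constantCoeff (R := ℝ) g = 0) :
    PSComp (f₁ * f₂) g = PSComp f₁ g * PSComp f₂ g := by
  ext n
  set H : ℕ × ℕ → ℝ := fun p =>
    coeff (R := ℝ) p.1 f₁ * coeff (R := ℝ) p.2 f₂ * coeff (R := ℝ) n (g ^ (p.1 + p.2)) with hH
  set T : Finset (ℕ × ℕ) := (Finset.range (n+1)).biUnion (fun k => Finset.HasAntidiagonal.antidiagonal k) with hT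
  have hmemT : ∀ p : ℕ × ℕ, p ∈ T ↔ p.1 + p.2 ≤ n := by
    intro p
    simp only [hT, Finset.mem_biUnion, Finset.mem_range, Finset.HasAntidiagonal.mem_antidiagonal]
    constructor
    · rintro ⟨k, hk, rfl⟩; omega
    · intro h; exact ⟨p.1 + p.2, by omega, rfl⟩
  have step1 : coeff (R := ℝ) n (PSComp (f₁ * f₂) g) = ∑ p ∈ T, H p := by
    rw [coeff_PSComp, hT, Finset.sum_biUnion]
    · refine Finset.sum_congr rfl fun k _ => ?_
      rw [coeff_mul, Finset.sum_mul]
      refine Finset.sum_congr rfl fun p hp => ?_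
      rw [Finset.HasAntidiagonal.mem_antidiagonal] at hp
      rw [hH]; dsimp only; rw [hp]
    · intro a _ b _ hab
      simp only [Finset.disjoint_left, Finset.HasAntidiagonal.mem_antidiagonal]
      intro p h1 h2
      exact hab (by omega)
  have step2 : ∑ p ∈ T, H p = ∑ p ∈ Finset.range (n+1) ×ˢ Finset.range (n+1), H p := by
    refine Finset.sum_subset ?_ ?_
    · intro p hp
      rw [hmemT] at hp
      rw [Finset.mem_product, Finset.mem_range, Finset.mem_range]
      omega
    · intro p _ hp
      rw [hmemT] at hp
      rw [hH]; dsimp only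
      rw [coeff_pow_eq_zero hg (by omega), mul_zero]
  have step3 : ∑ p ∈ Finset.range (n+1) ×ˢ Finset.range (n+1), H p
      = ∑ q ∈ Finset.HasAntidiagonal.antidiagonal n, ∑ i ∈ Finset.range (n+1), ∑ j ∈ Finset.range (n+1),
          (coeff (R := ℝ) i f₁ * coeff (R := ℝ) q.1 (g ^ i)) * (coeff (R := ℝ) j f₂ * coeff (R := ℝ) q.2 (g ^ j)) := by
    rw [Finset.sum_product]
    have inner : ∀ i ∈ Finset.range (n+1), ∑ j ∈ Finset.range (n+1), H (i, j)
        = ∑ q ∈ Finset.HasAntidiagonal.antidiagonal n, ∑ j ∈ Finset.range (n+1),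
            (coeff (R := ℝ) i f₁ * coeff (R := ℝ) q.1 (g ^ i)) * (coeff (R := ℝ) j f₂ * coeff (R := ℝ) q.2 (g ^ j)) := by
      intro i _
      rw [Finset.sum_comm]
      refine Finset.sum_congr rfl fun j _ => ?_
      rw [hH]; dsimp only
      rw [pow_add, coeff_mul, Finset.mul_sum]
      exact Finset.sum_congr rfl fun q _ => by ring
    rw [Finset.sum_congr rfl inner, Finset.sum_comm]
  have step4 : coeff (R := ℝ) n (PSComp f₁ g * PSComp f₂ g)
      = ∑ q ∈ Finset.HasAntidiagonal.antidiagonal n, ∑ i ∈ Finset.range (n+1), ∑ j ∈ Finset.range (n+1),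
          (coeff (R := ℝ) i f₁ * coeff (R := ℝ) q.1 (g ^ i)) * (coeff (R := ℝ) j f₂ * coeff (R := ℝ) q.2 (g ^ j)) := by
    rw [coeff_mul]
    refine Finset.sum_congr rfl fun q hq => ?_
    rw [Finset.HasAntidiagonal.mem_antidiagonal] at hq
    rw [coeff_PSComp, coeff_PSComp]
    have e1 : ∑ k ∈ Finset.range (q.1 + 1), coeff (R := ℝ) k f₁ * coeff (R := ℝ) q.1 (g ^ k)
        = ∑ k ∈ Finset.range (n + 1), coeff (R := ℝ) k f₁ * coeff (R := ℝ) q.1 (g ^ k) := by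
      refine Finset.sum_subset (Finset.range_subset_range.2 (by omega)) fun k _ hk => ?_
      rw [Finset.mem_range] at hk
      rw [coeff_pow_eq_zero hg (by omega), mul_zero]
    have e2 : ∑ k ∈ Finset.range (q.2 + 1), coeff (R := ℝ) k f₂ * coeff (R := ℝ) q.2 (g ^ k)
        = ∑ k ∈ Finset.range (n + 1), coeff (R := ℝ) k f₂ * coeff (R := ℝ) q.2 (g ^ k) := by
      refine Finset.sum_subset (Finset.range_subset_range.2 (by omega)) fun k _ hk => ?_
      rw [Finset.mem_range] at hk
      rw [coeff_pow_eq_zero hg (by omega), mul_zero]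
    rw [e1, e2, Finset.sum_mul]
    exact Finset.sum_congr rfl fun i _ => by rw [Finset.mul_sum]
  rw [step1, step2, step3, step4]

lemma PSComp_one (g : PowerSeries ℝ) : PSComp 1 g = 1 := by
  ext n
  rw [coeff_PSComp]
  rw [Finset.sum_eq_single 0]
  · simp
  · intro k _ hk
    rw [coeff_one, if_neg hk, zero_mul]
  · intro h; simp at h

lemma PSComp_C_mul (c : ℝ) (f g : PowerSeries ℝ) :
    PSComp (C (R := ℝ) c * f) g = C (R := ℝ) c * PSComp f g := by
  ext n
  rw [coeff_PSComp, coeff_C_mul, coeff_PSComp, Finset.mul_sum]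
  exact Finset.sum_congr rfl fun k _ => by rw [coeff_C_mul]; ring

lemma PSComp_pow (f g : PowerSeries ℝ) (hg : constantCoeff (R := ℝ) g = 0) (m : ℕ) :
    PSComp (f ^ m) g = (PSComp f g) ^ m := by
  induction m with
  | zero => rw [pow_zero, pow_zero, PSComp_one]
  | succ m ih => rw [pow_succ, pow_succ, PSComp_mul _ _ _ hg, ih]

lemma PSComp_X (g : PowerSeries ℝ) (hg : constantCoeff (R := ℝ) g = 0) : PSComp X g = g := by
  ext n
  rw [coeff_PSComp]
  rw [Finset.sum_eq_single 1]
  · simp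
  · intro k _ hk
    rw [coeff_X, if_neg hk, zero_mul]
  · intro h
    rw [Finset.mem_range, not_lt] at h
    obtain rfl : n = 0 := by omega
    rw [pow_one, coeff_zero_eq_constantCoeff_apply, hg, mul_zero]

open PowerSeries in
lemma lemA' (k n : ℕ) : coeff (R := ℝ) n ((exp ℝ - 1) ^ k)
    = (k.factorial * S2 n k : ℝ) / n.factorial := by
  rw [lemA k, coeff_mk]

open PowerSeries in
lemma hτ0 : constantCoeff (R := ℝ) (exp ℝ - 1) = 0 := by
  rw [map_sub, constantCoeff_exp, constantCoeff_one, sub_self]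

/-- The EGF of the `m`-th column of the `p`-th power of the Stirling matrix is
`(σ^p)^m / m!`. -/
theorem egf_column_Stirling_power (p m : ℕ) (hp : 1 ≤ p) :
    (PowerSeries.mk fun n => (Sp p n m : ℝ) / n.factorial) =
      PowerSeries.C (R := ℝ) (1 / m.factorial) * (sigmaP p) ^ m := by
  induction p, hp using Nat.le_induction generalizing m with
  | base =>
    have h1 : sigmaP 1 = PowerSeries.exp ℝ - 1 := by
      show PSComp (sigmaP 0) (PowerSeries.exp ℝ - 1) = _
      show PSComp PowerSeries.X (PowerSeries.exp ℝ - 1) = _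
      exact PSComp_X _ hτ0
    rw [h1, lemA m]
    ext n
    rw [PowerSeries.coeff_mk, PowerSeries.coeff_C_mul, PowerSeries.coeff_mk]
    have hm : (m.factorial : ℝ) ≠ 0 := Nat.cast_ne_zero.2 m.factorial_ne_zero
    have hSp : Sp 1 n m = S2 n m := rfl
    rw [hSp]
    field_simp
  | succ p hp ih =>
    have hσ : sigmaP (p + 1) = PSComp (sigmaP p) (PowerSeries.exp ℝ - 1) := rfl
    rw [hσ, ← PSComp_pow _ _ hτ0, ← PSComp_C_mul, ← ih m]
    obtain ⟨p', rfl⟩ : ∃ p', p = p' + 1 := ⟨p - 1, by omega⟩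
    have hSp : ∀ n, Sp (p' + 1 + 1) n m
        = ∑ k ∈ Finset.range (n + 1), S2 n k * Sp (p' + 1) k m := fun n => rfl
    ext n
    rw [PowerSeries.coeff_mk, coeff_PSComp, hSp n]
    have hterm : ∀ k ∈ Finset.range (n + 1),
        (PowerSeries.coeff (R := ℝ) k) (PowerSeries.mk fun j => (Sp (p' + 1) j m : ℝ) / j.factorial)
          * (PowerSeries.coeff (R := ℝ) n) ((PowerSeries.exp ℝ - 1) ^ k)
        = ((S2 n k * Sp (p' + 1) k m : ℕ) : ℝ) / n.factorial := by
      intro k _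
      rw [PowerSeries.coeff_mk, lemA']
      have hk : (k.factorial : ℝ) ≠ 0 := Nat.cast_ne_zero.2 k.factorial_ne_zero
      push_cast
      field_simp
    rw [Finset.sum_congr rfl hterm, ← Finset.sum_div, ← Nat.cast_sum]
end

section
/- For every integer p ≥ 1, every n ≥ 0, and every real x, the higher order Fubini polynomial satisfies F_n^p(x) = Σ_{k=0}^n A^p_{n,k}·(x+1)^k·x^{n−k}. -/
/-- Higher order Eulerian numbers:
`A^p_{n,m} = ∑_{k=0}^n k!·S^p_{n,k}·C(n-k,m)·(-1)^{n-k-m}` (the terms with `m > n-k`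
vanish since then the binomial coefficient is zero). -/
def EulerNum (p n m : ℕ) : ℤ :=
  ∑ k ∈ Finset.range (n + 1),
    (k.factorial * Sp p n k : ℤ) * ((n - k).choose m) * (-1) ^ (n - k - m)

/-- Higher order Fubini polynomials: `F_n^p(x) = ∑_{m=0}^n S^p_{n,m} m! x^m`. -/
noncomputable def FubPoly (p n : ℕ) (x : ℝ) : ℝ :=
  ∑ m ∈ Finset.range (n + 1), (Sp p n m : ℝ) * m.factorial * x ^ m

lemma inner_key (n j : ℕ) (hjn : j ≤ n) (x : ℝ) :
    ∑ k ∈ Finset.range (n + 1),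
      (((n - j).choose k : ℝ) * (-1 : ℝ) ^ (n - j - k)) * ((x + 1) ^ k * x ^ (n - k))
      = x ^ j := by
  set N := n - j with hN
  have hsub : Finset.range (N + 1) ⊆ Finset.range (n + 1) :=
    Finset.range_subset_range.mpr (by omega)
  rw [← Finset.sum_subset hsub (by
    intro k _ hk'
    have : N < k := by
      simpa [Finset.mem_range, Nat.lt_succ_iff, not_le] using hk'
    simp [Nat.choose_eq_zero_of_lt this])]
  have hcong : ∀ k ∈ Finset.range (N + 1),
      (((N.choose k : ℝ)) * (-1 : ℝ) ^ (N - k)) * ((x + 1) ^ k * x ^ (n - k))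
      = ((x + 1) ^ k * (-x) ^ (N - k) * N.choose k) * x ^ j := by
    intro k hk
    have hkN : k ≤ N := Nat.lt_succ_iff.mp (Finset.mem_range.mp hk)
    have hnk : n - k = (N - k) + j := by omega
    rw [hnk, pow_add, neg_pow]
    ring
  rw [Finset.sum_congr rfl hcong, ← Finset.sum_mul, ← add_pow]
  norm_num

/-- `F_n^p(x) = ∑_{k=0}^n A^p_{n,k} (x+1)^k x^{n-k}`. -/
theorem fubini_poly_eq_eulerian_sum (p : ℕ) (hp : 1 ≤ p) (n : ℕ) (x : ℝ) :
    FubPoly p n x =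
      ∑ k ∈ Finset.range (n + 1), (EulerNum p n k : ℝ) * (x + 1) ^ k * x ^ (n - k) := by
  unfold FubPoly EulerNum
  push_cast
  symm
  rw [Finset.sum_congr rfl (fun k _ => by rw [Finset.sum_mul, Finset.sum_mul]),
    Finset.sum_comm]
  refine Finset.sum_congr rfl fun j hj => ?_
  have hjn : j ≤ n := Nat.lt_succ_iff.mp (Finset.mem_range.mp hj)
  have := inner_key n j hjn x
  calc ∑ k ∈ Finset.range (n + 1),
        (j.factorial * (Sp p n j : ℝ)) * ((n - j).choose k) * (-1) ^ (n - j - k) *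
          (x + 1) ^ k * x ^ (n - k)
      = (j.factorial * (Sp p n j : ℝ)) *
        ∑ k ∈ Finset.range (n + 1),
          (((n - j).choose k : ℝ) * (-1 : ℝ) ^ (n - j - k)) * ((x + 1) ^ k * x ^ (n - k)) := by
        rw [Finset.mul_sum]; exact Finset.sum_congr rfl fun k _ => by ring
    _ = (Sp p n j : ℝ) * j.factorial * x ^ j := by rw [this]; ring
end

section
/- For every integer p ≥ 1, every n ≥ 0, and every real x ≠ 0: F_n^p(x) = x^n·A_n^p((x+1)/x), where A_n^p(y) := Σ_{m=0}^n A^p_{n,m}·y^m is the n-th higher order Eulerian polynomial. -/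
/-- Higher order Eulerian polynomials: `A_n^p(y) = ∑_{m=0}^n A^p_{n,m} y^m`. -/
noncomputable def EulerPoly (p n : ℕ) (y : ℝ) : ℝ :=
  ∑ m ∈ Finset.range (n + 1), (EulerNum p n m : ℝ) * y ^ m

/-- `F_n^p(x) = x^n · A_n^p((x+1)/x)` for `x ≠ 0`. -/
theorem fubini_poly_eq_eulerian_poly (p : ℕ) (hp : 1 ≤ p) (n : ℕ) (x : ℝ) (hx : x ≠ 0) :
    FubPoly p n x = x ^ n * EulerPoly p n ((x + 1) / x) := by
  have hkey : ∀ j : ℕ, j ≤ n →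
      ∑ m ∈ Finset.range (n + 1), (j.choose m : ℝ) * (-1) ^ (j - m) * ((x + 1) / x) ^ m
        = (1 / x) ^ j := by
    intro j hj
    have hsub : Finset.range (j + 1) ⊆ Finset.range (n + 1) :=
      Finset.range_subset_range.2 (by omega)
    rw [← Finset.sum_subset hsub (by
      intro m _ hm
      simp only [Finset.mem_range, not_lt] at hm
      rw [Nat.choose_eq_zero_of_lt (by omega)]
      simp)]
    have hy : (x + 1) / x - 1 = 1 / x := by field_simp; ring
    rw [← hy, sub_pow]
    apply Finset.sum_congr rfl
    intro m hm
    simp only [Finset.mem_range] at hm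
    have hpar : (-1 : ℝ) ^ (m + j) = (-1) ^ (j - m) := by
      rw [show m + j = (j - m) + 2 * m by omega, pow_add]
      simp [pow_mul]
    rw [hpar]; ring
  unfold FubPoly EulerPoly EulerNum
  push_cast
  rw [Finset.mul_sum]
  simp_rw [Finset.sum_mul, Finset.mul_sum]
  rw [Finset.sum_comm]
  apply Finset.sum_congr rfl
  intro k hk
  simp only [Finset.mem_range] at hk
  have hk' : k ≤ n := by omega
  have : ∑ m ∈ Finset.range (n + 1),
      x ^ n * ((k.factorial : ℝ) * (Sp p n k) * ((n - k).choose m) * (-1) ^ (n - k - m)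
        * ((x + 1) / x) ^ m)
      = x ^ n * ((k.factorial : ℝ) * (Sp p n k)) *
        ∑ m ∈ Finset.range (n + 1),
          ((n - k).choose m : ℝ) * (-1) ^ (n - k - m) * ((x + 1) / x) ^ m := by
    rw [Finset.mul_sum]; apply Finset.sum_congr rfl; intro m _; ring
  rw [this, hkey (n - k) (by omega)]
  have hxk : x ^ n * (1 / x) ^ (n - k) = x ^ k := by
    rw [div_pow, one_pow, show n = k + (n - k) by omega, pow_add]
    field_simp
    congr 1; omega
  calc (Sp p n k : ℝ) * k.factorial * x ^ k
      = x ^ n * ((k.factorial : ℝ) * (Sp p n k)) * (1 / x) ^ (n - k) := by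
        rw [show x ^ n * ((k.factorial : ℝ) * (Sp p n k)) * (1 / x) ^ (n - k)
          = (Sp p n k : ℝ) * k.factorial * (x ^ n * (1 / x) ^ (n - k)) by ring, hxk]
    _ = _ := by ring
end
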